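/- Let n ≥ 1, let A = (a^{ij}) be a symmetric positive-definite n×n real matrix and b ∈ ℝⁿ. For y ∈ ℝⁿ set α(y) = √(yᵀAy), β(y) = bᵀy, Y(y) = Ay, and on the open region where 0 < α(y) < β(y) set F(y) = (1/2)·α(y)β(y)²/(β(y) − α(y)). Then on this region the Hessian of F is given by ∂²F/∂y_i∂y_j = [β³/(2α(β − α)²)]·a^{ij} + [α³/(β − α)³]·b^i b^j + [(β³ − 3αβ²)/(2α(β − α)³)]·(b^i Y^j + b^j Y^i) + [β³(3α − β)/(2α³(β − α)³)]·Y^i Y^j, with α, β, Y evaluated at y. -/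

import Mathlib

open Matrix

/-- Partial derivative of a function on `ℝⁿ` with respect to the `i`-th coordinate. -/
noncomputable def pder {n : ℕ} (i : Fin n) (F : (Fin n → ℝ) → ℝ) : (Fin n → ℝ) → ℝ :=
  fun y => deriv (fun t => F (Function.update y i t)) (y i)

lemma update_decomp {n : ℕ} (z : Fin n → ℝ) (i : Fin n) (t : ℝ) :
    Function.update z i t = z + (t - z i) • (Pi.single i 1 : Fin n → ℝ) := by
  ext k
  by_cases h : k = i
  · subst h; simp
  · simp [Function.update_apply, h, Pi.single_apply]

lemma dot_single {n : ℕ} (A : Matrix (Fin n) (Fin n) ℝ) (hAsymm : A.IsSymm)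
    (z : Fin n → ℝ) (i : Fin n) :
    z ⬝ᵥ A.mulVec (Pi.single i 1 : Fin n → ℝ) = (A.mulVec z) i := by
  rw [Matrix.dotProduct_mulVec,
    show z ᵥ* A = A.mulVec z by conv_lhs => rw [← hAsymm.eq, Matrix.vecMul_transpose],
    dotProduct_single, mul_one]

lemma slice_q {n : ℕ} (A : Matrix (Fin n) (Fin n) ℝ) (hAsymm : A.IsSymm)
    (z : Fin n → ℝ) (i : Fin n) (t : ℝ) :
    Function.update z i t ⬝ᵥ A.mulVec (Function.update z i t)
      = z ⬝ᵥ A.mulVec z + 2 * (t - z i) * (A.mulVec z) i + (t - z i) ^ 2 * A i i := by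
  rw [update_decomp]
  rw [Matrix.mulVec_add, Matrix.mulVec_smul, dotProduct_add, add_dotProduct,
    add_dotProduct, dotProduct_smul, smul_dotProduct, smul_dotProduct,
    dotProduct_smul, dot_single A hAsymm, single_dotProduct, one_mul,
    single_dotProduct, one_mul]
  have h2 : (A.mulVec (Pi.single i 1 : Fin n → ℝ)) i = A i i := by
    simp [Matrix.mulVec_single]
  rw [h2]
  simp only [smul_eq_mul]
  ring

lemma slice_b {n : ℕ} (b z : Fin n → ℝ) (i : Fin n) (t : ℝ) :
    b ⬝ᵥ Function.update z i t = b ⬝ᵥ z + (t - z i) * b i := by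
  rw [update_decomp, dotProduct_add, dotProduct_smul, dotProduct_single,
    mul_one, smul_eq_mul]

lemma slice_Y {n : ℕ} (A : Matrix (Fin n) (Fin n) ℝ)
    (z : Fin n → ℝ) (i k : Fin n) (t : ℝ) :
    (A.mulVec (Function.update z i t)) k = (A.mulVec z) k + (t - z i) * A k i := by
  rw [update_decomp, Matrix.mulVec_add, Matrix.mulVec_smul]
  simp [Matrix.mulVec_single]

noncomputable def Gfun {n : ℕ} (A : Matrix (Fin n) (Fin n) ℝ) (b : Fin n → ℝ)
    (i : Fin n) (z : Fin n → ℝ) : ℝ :=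
  (1/2) * ((((A.mulVec z) i / Real.sqrt (z ⬝ᵥ A.mulVec z) * (b ⬝ᵥ z)^2
      + Real.sqrt (z ⬝ᵥ A.mulVec z) * (2 * (b ⬝ᵥ z) * b i)) * ((b ⬝ᵥ z) - Real.sqrt (z ⬝ᵥ A.mulVec z))
      - Real.sqrt (z ⬝ᵥ A.mulVec z) * (b ⬝ᵥ z)^2 * (b i - (A.mulVec z) i / Real.sqrt (z ⬝ᵥ A.mulVec z)))
    / ((b ⬝ᵥ z) - Real.sqrt (z ⬝ᵥ A.mulVec z))^2)

lemma pder_eq {n : ℕ} (A : Matrix (Fin n) (Fin n) ℝ) (b : Fin n → ℝ)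
    (hAsymm : A.IsSymm) (i : Fin n) (z : Fin n → ℝ)
    (h1 : 0 < z ⬝ᵥ A.mulVec z) (h2 : Real.sqrt (z ⬝ᵥ A.mulVec z) < b ⬝ᵥ z) :
    pder i (fun w => (1 / 2) *
        (Real.sqrt (w ⬝ᵥ A.mulVec w) * (b ⬝ᵥ w) ^ 2
          / ((b ⬝ᵥ w) - Real.sqrt (w ⬝ᵥ A.mulVec w)))) z = Gfun A b i z := by
  have ha : (0:ℝ) < Real.sqrt (z ⬝ᵥ A.mulVec z) := Real.sqrt_pos.2 h1
  have hba : (b ⬝ᵥ z) - Real.sqrt (z ⬝ᵥ A.mulVec z) ≠ 0 := (sub_pos.mpr h2).ne'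
  have key : (fun t => (1 / 2) *
        (Real.sqrt (Function.update z i t ⬝ᵥ A.mulVec (Function.update z i t))
          * (b ⬝ᵥ Function.update z i t) ^ 2
          / ((b ⬝ᵥ Function.update z i t)
            - Real.sqrt (Function.update z i t ⬝ᵥ A.mulVec (Function.update z i t)))))
      = (fun t => (1 / 2) *
        (Real.sqrt (z ⬝ᵥ A.mulVec z + 2 * (t - z i) * (A.mulVec z) i + (t - z i) ^ 2 * A i i)
          * (b ⬝ᵥ z + (t - z i) * b i) ^ 2
          / ((b ⬝ᵥ z + (t - z i) * b i)
            - Real.sqrt (z ⬝ᵥ A.mulVec z + 2 * (t - z i) * (A.mulVec z) i + (t - z i) ^ 2 * A i i)))) := by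
    funext t; rw [slice_q A hAsymm, slice_b b]
  unfold pder
  rw [key]
  have ht : HasDerivAt (fun t : ℝ => t - z i) 1 (z i) := (hasDerivAt_id _).sub_const _
  have hQ : HasDerivAt (fun t : ℝ => z ⬝ᵥ A.mulVec z + 2 * (t - z i) * (A.mulVec z) i
      + (t - z i) ^ 2 * A i i)
      (2 * 1 * (A.mulVec z) i + 2 * (z i - z i) ^ 1 * 1 * A i i) (z i) :=
    (((ht.const_mul 2).mul_const ((A.mulVec z) i)).const_add _).add ((ht.pow 2).mul_const (A i i))
  have hQ0 : z ⬝ᵥ A.mulVec z + 2 * (z i - z i) * (A.mulVec z) i + (z i - z i) ^ 2 * A i i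
      = z ⬝ᵥ A.mulVec z := by simp
  have hB : HasDerivAt (fun t : ℝ => b ⬝ᵥ z + (t - z i) * b i) (1 * b i) (z i) :=
    (ht.mul_const (b i)).const_add _
  have hs := hQ.sqrt (by rw [hQ0]; exact h1.ne')
  have hN := hs.mul (hB.pow 2)
  have hD := hB.sub hs
  have hdiv := hN.div hD (by simpa using hba)
  have hF := hdiv.const_mul (1/2 : ℝ)
  refine hF.deriv.trans ?_
  unfold Gfun
  rw [hQ0]
  simp only [sub_self, mul_zero, zero_mul, add_zero, mul_one, pow_one, one_mul,
    zero_pow, mul_zero, Pi.sub_apply, Pi.add_apply, Pi.mul_apply, Pi.pow_apply, Pi.div_apply,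
    ne_eq, OfNat.ofNat_ne_zero, not_false_eq_true, Nat.cast_ofNat]
  generalize Real.sqrt (z ⬝ᵥ A.mulVec z) = s at ha hba ⊢
  field_simp
  ring

set_option maxHeartbeats 2000000 in
/-- The fundamental tensor (Hessian of `F = (1/2)·αβ²/(β − α)`) of the Cartan space
with deformed infinite series metric `H(α, β) = αβ²/(β − α)`. -/
theorem fundamental_tensor_deformed_infinite_series_riemannian
    (n : ℕ) (hn : 1 ≤ n)
    (A : Matrix (Fin n) (Fin n) ℝ) (hA : A.PosDef) (hAsymm : A.IsSymm)
    (b : Fin n → ℝ)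
    (y : Fin n → ℝ)
    (hy1 : 0 < Real.sqrt (y ⬝ᵥ A.mulVec y))
    (hy2 : Real.sqrt (y ⬝ᵥ A.mulVec y) < b ⬝ᵥ y) :
    ∀ i j : Fin n,
      let al := Real.sqrt (y ⬝ᵥ A.mulVec y)
      let be := b ⬝ᵥ y
      let Y := A.mulVec y
      pder j (pder i (fun z => (1 / 2) *
          (Real.sqrt (z ⬝ᵥ A.mulVec z) * (b ⬝ᵥ z) ^ 2
            / ((b ⬝ᵥ z) - Real.sqrt (z ⬝ᵥ A.mulVec z))))) y =
        (be ^ 3 / (2 * al * (be - al) ^ 2)) * A i j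
          + (al ^ 3 / (be - al) ^ 3) * b i * b j
          + ((be ^ 3 - 3 * al * be ^ 2) / (2 * al * (be - al) ^ 3))
              * (b i * Y j + b j * Y i)
          + (be ^ 3 * (3 * al - be) / (2 * al ^ 3 * (be - al) ^ 3)) * Y i * Y j := by
  intro i j
  have hq : 0 < y ⬝ᵥ A.mulVec y := by
    by_contra h
    push_neg at h
    rw [Real.sqrt_eq_zero'.mpr h] at hy1
    exact lt_irrefl _ hy1
  show pder j (pder i (fun z => (1 / 2) *
          (Real.sqrt (z ⬝ᵥ A.mulVec z) * (b ⬝ᵥ z) ^ 2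
            / ((b ⬝ᵥ z) - Real.sqrt (z ⬝ᵥ A.mulVec z))))) y =
        ((b ⬝ᵥ y) ^ 3 / (2 * Real.sqrt (y ⬝ᵥ A.mulVec y) * ((b ⬝ᵥ y) - Real.sqrt (y ⬝ᵥ A.mulVec y)) ^ 2)) * A i j
          + (Real.sqrt (y ⬝ᵥ A.mulVec y) ^ 3 / ((b ⬝ᵥ y) - Real.sqrt (y ⬝ᵥ A.mulVec y)) ^ 3) * b i * b j
          + (((b ⬝ᵥ y) ^ 3 - 3 * Real.sqrt (y ⬝ᵥ A.mulVec y) * (b ⬝ᵥ y) ^ 2) / (2 * Real.sqrt (y ⬝ᵥ A.mulVec y) * ((b ⬝ᵥ y) - Real.sqrt (y ⬝ᵥ A.mulVec y)) ^ 3))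
              * (b i * (A.mulVec y) j + b j * (A.mulVec y) i)
          + ((b ⬝ᵥ y) ^ 3 * (3 * Real.sqrt (y ⬝ᵥ A.mulVec y) - (b ⬝ᵥ y)) / (2 * Real.sqrt (y ⬝ᵥ A.mulVec y) ^ 3 * ((b ⬝ᵥ y) - Real.sqrt (y ⬝ᵥ A.mulVec y)) ^ 3)) * (A.mulVec y) i * (A.mulVec y) j
  have e0 : pder j (pder i (fun z => (1 / 2) *
          (Real.sqrt (z ⬝ᵥ A.mulVec z) * (b ⬝ᵥ z) ^ 2
            / ((b ⬝ᵥ z) - Real.sqrt (z ⬝ᵥ A.mulVec z))))) y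
      = deriv (fun t => pder i (fun z => (1 / 2) *
          (Real.sqrt (z ⬝ᵥ A.mulVec z) * (b ⬝ᵥ z) ^ 2
            / ((b ⬝ᵥ z) - Real.sqrt (z ⬝ᵥ A.mulVec z)))) (Function.update y j t)) (y j) := rfl
  rw [e0]
  -- continuity facts for the slice along coordinate j
  set q : ℝ := y ⬝ᵥ A.mulVec y with hqdef
  have hQc : Continuous (fun t : ℝ => q + 2 * (t - y j) * (A.mulVec y) j + (t - y j) ^ 2 * A j j) := by
    fun_prop
  have hBc : Continuous (fun t : ℝ => b ⬝ᵥ y + (t - y j) * b j) := by fun_prop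
  have hSopen : IsOpen {t : ℝ | 0 < q + 2 * (t - y j) * (A.mulVec y) j + (t - y j) ^ 2 * A j j
      ∧ Real.sqrt (q + 2 * (t - y j) * (A.mulVec y) j + (t - y j) ^ 2 * A j j)
        < b ⬝ᵥ y + (t - y j) * b j} := by
    exact (isOpen_lt continuous_const hQc).inter
      (isOpen_lt (Real.continuous_sqrt.comp hQc) hBc)
  have hmem : y j ∈ {t : ℝ | 0 < q + 2 * (t - y j) * (A.mulVec y) j + (t - y j) ^ 2 * A j j
      ∧ Real.sqrt (q + 2 * (t - y j) * (A.mulVec y) j + (t - y j) ^ 2 * A j j)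
        < b ⬝ᵥ y + (t - y j) * b j} := by
    constructor
    · simpa using hq
    · simpa using hy2
  have hev : (fun t => pder i (fun z => (1 / 2) *
          (Real.sqrt (z ⬝ᵥ A.mulVec z) * (b ⬝ᵥ z) ^ 2
            / ((b ⬝ᵥ z) - Real.sqrt (z ⬝ᵥ A.mulVec z)))) (Function.update y j t))
      =ᶠ[nhds (y j)] (fun t => Gfun A b i (Function.update y j t)) := by
    filter_upwards [hSopen.mem_nhds hmem] with t ht
    refine pder_eq A b hAsymm i (Function.update y j t) ?_ ?_
    · rw [slice_q A hAsymm]; exact ht.1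
    · rw [slice_q A hAsymm, slice_b b]; exact ht.2
  rw [hev.deriv_eq]
  have key2 : (fun t => Gfun A b i (Function.update y j t))
      = (fun t => (1/2) *
        (((((A.mulVec y) i + (t - y j) * A i j)
              / Real.sqrt (q + 2 * (t - y j) * (A.mulVec y) j + (t - y j) ^ 2 * A j j)
              * (b ⬝ᵥ y + (t - y j) * b j) ^ 2
            + Real.sqrt (q + 2 * (t - y j) * (A.mulVec y) j + (t - y j) ^ 2 * A j j)
              * (2 * (b ⬝ᵥ y + (t - y j) * b j) * b i))
            * ((b ⬝ᵥ y + (t - y j) * b j)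
              - Real.sqrt (q + 2 * (t - y j) * (A.mulVec y) j + (t - y j) ^ 2 * A j j))
          - Real.sqrt (q + 2 * (t - y j) * (A.mulVec y) j + (t - y j) ^ 2 * A j j)
              * (b ⬝ᵥ y + (t - y j) * b j) ^ 2
              * (b i - ((A.mulVec y) i + (t - y j) * A i j)
                / Real.sqrt (q + 2 * (t - y j) * (A.mulVec y) j + (t - y j) ^ 2 * A j j)))
          / ((b ⬝ᵥ y + (t - y j) * b j)
            - Real.sqrt (q + 2 * (t - y j) * (A.mulVec y) j + (t - y j) ^ 2 * A j j)) ^ 2)) := by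
    funext t
    unfold Gfun
    rw [slice_q A hAsymm, slice_b b, slice_Y A, hqdef]
  rw [key2]
  have hQ0 : q + 2 * (y j - y j) * (A.mulVec y) j + (y j - y j) ^ 2 * A j j = q := by simp
  have ha : (0:ℝ) < Real.sqrt q := hy1
  have hba : (b ⬝ᵥ y) - Real.sqrt q ≠ 0 := (sub_pos.mpr hy2).ne'
  have ht : HasDerivAt (fun t : ℝ => t - y j) 1 (y j) := (hasDerivAt_id _).sub_const _
  have hQ : HasDerivAt (fun t : ℝ => q + 2 * (t - y j) * (A.mulVec y) j + (t - y j) ^ 2 * A j j)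
      (2 * 1 * (A.mulVec y) j + 2 * (y j - y j) ^ 1 * 1 * A j j) (y j) :=
    (((ht.const_mul 2).mul_const ((A.mulVec y) j)).const_add _).add ((ht.pow 2).mul_const (A j j))
  have hB : HasDerivAt (fun t : ℝ => b ⬝ᵥ y + (t - y j) * b j) (1 * b j) (y j) :=
    (ht.mul_const (b j)).const_add _
  have hZ : HasDerivAt (fun t : ℝ => (A.mulVec y) i + (t - y j) * A i j) (1 * A i j) (y j) :=
    (ht.mul_const (A i j)).const_add _
  have hs := hQ.sqrt (by rw [hQ0]; exact (Real.sqrt_pos.1 hy1).ne')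
  have hsne : Real.sqrt (q + 2 * (y j - y j) * (A.mulVec y) j + (y j - y j) ^ 2 * A j j) ≠ 0 := by
    rw [hQ0]; exact ha.ne'
  have hu := hZ.div hs hsne
  have hv := hB.pow 2
  have h1 := hu.mul hv
  have h2i := hs.mul ((hB.const_mul 2).mul_const (b i))
  have h3 := (h1.add h2i).mul (hB.sub hs)
  have h4 := (hs.mul hv).mul (hu.const_sub (b i))
  have h5 := h3.sub h4
  have h6 := (hB.sub hs).pow 2
  have h7 := h5.div h6 (by simpa using pow_ne_zero 2 hba)
  have h8 := h7.const_mul (1/2 : ℝ)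
  refine h8.deriv.trans ?_
  simp only [sub_self, mul_zero, zero_mul, add_zero, mul_one, pow_one, one_mul,
    zero_pow, mul_zero, ne_eq, OfNat.ofNat_ne_zero, not_false_eq_true, Nat.cast_ofNat,
    Pi.sub_apply, Pi.add_apply, Pi.mul_apply, Pi.pow_apply, Pi.div_apply]
  have hsq2 : Real.sqrt q ^ 2 = q := Real.sq_sqrt hq.le
  generalize hgen : Real.sqrt q = s at hsq2 ha hba ⊢
  try rw [← hsq2]
  field_simp
  ring
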